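/- arXiv:2011.07471 — 2 statements merged into one kernel-verified Lean document; each statement's English description precedes it below -/
import Mathlib

section
/- Let F be a monotone function on frequency vectors (F(x) ≤ F(y) whenever x ⪯ y coordinatewise), with nonnegative values. Let u, v₁, …, v_k be nonnegative vectors, and suppose for each i ∈ {1,…,k} there are parameters γ_i, ε_i > 0 with F(u+v₁+⋯+v_i) − F(u+v₁+⋯+v_{i−1}) ≤ γ_i · F(u+v₁+⋯+v_{i−1}) and ∏_{i=1}^k (1+γ_i) ≤ 2 and Σ_{i=1}^k ε_i ≤ ε/4. Suppose A₀ is a real number with |A₀ − F(u)| ≤ (ε/2)·F(u), and for each i, D_i is a real number with |D_i − (F(u+v₁+⋯+v_i) − F(u+v₁+⋯+v_{i−1}))| ≤ ε_i · F(u+v₁+⋯+v_{i−1}). Then |A₀ + Σ_{i=1}^k D_i − F(u+v₁+⋯+v_k)| ≤ ε · F(u+v₁+⋯+v_k). -/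
lemma telescope_icc (f : ℕ → ℝ) (k : ℕ) :
    ∑ i ∈ Finset.Icc 1 k, (f i - f (i - 1)) = f k - f 0 := by
  induction k with
  | zero => simp
  | succ k ih =>
      rw [Finset.sum_Icc_succ_top (by omega), ih]
      simp

theorem sketch_stitching (n : ℕ) (F : (Fin n → ℝ) → ℝ)
    (hmono : ∀ x y : Fin n → ℝ, (∀ j, x j ≤ y j) → F x ≤ F y)
    (hnonneg : ∀ x, 0 ≤ F x)
    (k : ℕ) (u : Fin n → ℝ) (v : ℕ → Fin n → ℝ)
    (hu : ∀ j, 0 ≤ u j) (hv : ∀ i j, 0 ≤ v i j)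
    (γ εi : ℕ → ℝ) (ε : ℝ) (hε : 0 < ε)
    (hγpos : ∀ i ∈ Finset.Icc 1 k, 0 < γ i)
    (hεipos : ∀ i ∈ Finset.Icc 1 k, 0 < εi i)
    (hdiff : ∀ i ∈ Finset.Icc 1 k,
      F (u + ∑ t ∈ Finset.Icc 1 i, v t) - F (u + ∑ t ∈ Finset.Icc 1 (i - 1), v t)
        ≤ γ i * F (u + ∑ t ∈ Finset.Icc 1 (i - 1), v t))
    (hprod : ∏ i ∈ Finset.Icc 1 k, (1 + γ i) ≤ 2)
    (hsum : ∑ i ∈ Finset.Icc 1 k, εi i ≤ ε / 4)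
    (A : ℝ) (hA : |A - F u| ≤ ε / 2 * F u)
    (D : ℕ → ℝ)
    (hD : ∀ i ∈ Finset.Icc 1 k,
      |D i - (F (u + ∑ t ∈ Finset.Icc 1 i, v t)
              - F (u + ∑ t ∈ Finset.Icc 1 (i - 1), v t))|
        ≤ εi i * F (u + ∑ t ∈ Finset.Icc 1 (i - 1), v t)) :
    |A + (∑ i ∈ Finset.Icc 1 k, D i) - F (u + ∑ t ∈ Finset.Icc 1 k, v t)|
      ≤ ε * F (u + ∑ t ∈ Finset.Icc 1 k, v t) := by
  set g : ℕ → ℝ := fun i => F (u + ∑ t ∈ Finset.Icc 1 i, v t) with hg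
  have hg0 : g 0 = F u := by simp [hg]
  -- monotonicity of g
  have hgmono : ∀ a b : ℕ, a ≤ b → g a ≤ g b := by
    intro a b hab
    apply hmono
    intro j
    simp only [Pi.add_apply, Finset.sum_apply]
    have : ∑ t ∈ Finset.Icc 1 a, v t j ≤ ∑ t ∈ Finset.Icc 1 b, v t j := by
      apply Finset.sum_le_sum_of_subset_of_nonneg
      · exact Finset.Icc_subset_Icc_right hab
      · intro t _ _; exact hv t j
    linarith
  have htel : ∑ i ∈ Finset.Icc 1 k, (g i - g (i - 1)) = g k - g 0 :=
    telescope_icc g k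
  have key : A + (∑ i ∈ Finset.Icc 1 k, D i) - g k
      = (A - g 0) + ∑ i ∈ Finset.Icc 1 k, (D i - (g i - g (i - 1))) := by
    rw [Finset.sum_sub_distrib, htel]; ring
  have hgk : 0 ≤ g k := hnonneg _
  calc |A + (∑ i ∈ Finset.Icc 1 k, D i) - g k|
      ≤ |A - g 0| + |∑ i ∈ Finset.Icc 1 k, (D i - (g i - g (i - 1)))| := by
        rw [key]; exact abs_add_le _ _
    _ ≤ ε / 2 * g k + ∑ i ∈ Finset.Icc 1 k, εi i * g k := by
        gcongr
        · calc |A - g 0| ≤ ε / 2 * g 0 := by rw [hg0]; exact hA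
            _ ≤ ε / 2 * g k := by
              have := hgmono 0 k (Nat.zero_le k)
              nlinarith
        · calc |∑ i ∈ Finset.Icc 1 k, (D i - (g i - g (i - 1)))|
              ≤ ∑ i ∈ Finset.Icc 1 k, |D i - (g i - g (i - 1))| :=
                Finset.abs_sum_le_sum_abs _ _
            _ ≤ ∑ i ∈ Finset.Icc 1 k, εi i * g k := by
                apply Finset.sum_le_sum
                intro i hi
                calc |D i - (g i - g (i - 1))| ≤ εi i * g (i - 1) := hD i hi
                  _ ≤ εi i * g k := by
                    have h1 : g (i - 1) ≤ g k := by
                      apply hgmono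
                      have := Finset.mem_Icc.mp hi
                      omega
                    have h2 : 0 < εi i := hεipos i hi
                    nlinarith
    _ = ε / 2 * g k + (∑ i ∈ Finset.Icc 1 k, εi i) * g k := by
        rw [Finset.sum_mul]
    _ ≤ ε / 2 * g k + ε / 4 * g k := by nlinarith
    _ ≤ ε * g k := by nlinarith
end

section
/- For 0 < p ≤ 1 and 0 < ε < 1, the function F_p(x) = Σ_i |x_i|^p on nonnegative vectors is (ε, ε)-smooth: for nonnegative vectors a, b, c ∈ ℝⁿ, if F_p(b) ≥ (1 − ε)·F_p(a+b), then F_p(b+c) ≥ (1 − ε)·F_p(a+b+c). -/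
lemma gap_antitone (p x : ℝ) (hp0 : 0 < p) (hp1 : p ≤ 1) (hx : 0 ≤ x) :
    AntitoneOn (fun t : ℝ => (t + x) ^ p - t ^ p) (Set.Ici 0) := by
  have hcont : Continuous fun t : ℝ => t ^ p := Real.continuous_rpow_const hp0.le
  apply antitoneOn_of_deriv_nonpos (convex_Ici 0)
  · exact ((hcont.comp (continuous_id.add continuous_const)).sub hcont).continuousOn
  · intro t ht
    rw [interior_Ici] at ht
    have ht0 : (0:ℝ) < t := ht
    have h1 : HasDerivAt (fun t : ℝ => (t + x) ^ p) (p * (t + x) ^ (p - 1) * 1) t := by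
      exact (Real.hasDerivAt_rpow_const (p := p) (x := t + x)
        (Or.inl (by positivity))).comp t ((hasDerivAt_id t).add_const x) |>.congr_deriv rfl
    have h2 : HasDerivAt (fun t : ℝ => t ^ p) (p * t ^ (p - 1)) t :=
      Real.hasDerivAt_rpow_const (Or.inl ht0.ne')
    exact (h1.sub h2).differentiableAt.differentiableWithinAt
  · intro t ht
    rw [interior_Ici] at ht
    have ht0 : (0:ℝ) < t := ht
    have h1 : HasDerivAt (fun t : ℝ => (t + x) ^ p) (p * (t + x) ^ (p - 1)) t := by
      have := (Real.hasDerivAt_rpow_const (p := p) (x := t + x)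
        (Or.inl (by positivity))).comp t ((hasDerivAt_id t).add_const x)
      exact this.congr_deriv (mul_one _)
    have h2 : HasDerivAt (fun t : ℝ => t ^ p) (p * t ^ (p - 1)) t :=
      Real.hasDerivAt_rpow_const (Or.inl ht0.ne')
    have hd : deriv (fun t : ℝ => (t + x) ^ p - t ^ p) t = _ := (h1.sub h2).deriv
    rw [hd]
    have : (t + x) ^ (p - 1) ≤ t ^ (p - 1) :=
      Real.rpow_le_rpow_of_nonpos ht0 (by linarith) (by linarith)
    nlinarith

theorem Fp_smooth_of_le_one (n : ℕ) (p ε : ℝ) (hp0 : 0 < p) (hp1 : p ≤ 1)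
    (hε0 : 0 < ε) (hε1 : ε < 1)
    (a b c : Fin n → ℝ) (ha : ∀ i, 0 ≤ a i) (hb : ∀ i, 0 ≤ b i) (hc : ∀ i, 0 ≤ c i)
    (h : (1 - ε) * ∑ i, (a i + b i) ^ p ≤ ∑ i, (b i) ^ p) :
    (1 - ε) * ∑ i, (a i + b i + c i) ^ p ≤ ∑ i, (b i + c i) ^ p := by
  have key : ∀ i, (a i + b i + c i) ^ p + (b i) ^ p ≤ (a i + b i) ^ p + (b i + c i) ^ p := by
    intro i
    have := gap_antitone p (a i) hp0 hp1 (ha i)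
      (Set.mem_Ici.2 (hb i)) (Set.mem_Ici.2 (add_nonneg (hb i) (hc i)))
      (le_add_of_nonneg_right (hc i))
    simp only at this
    have e1 : b i + c i + a i = a i + b i + c i := by ring
    have e2 : b i + a i = a i + b i := by ring
    rw [e1, e2] at this
    linarith
  have hsum : ∑ i, (a i + b i + c i) ^ p + ∑ i, (b i) ^ p
      ≤ ∑ i, (a i + b i) ^ p + ∑ i, (b i + c i) ^ p := by
    rw [← Finset.sum_add_distrib, ← Finset.sum_add_distrib]
    exact Finset.sum_le_sum fun i _ => key i
  have hmono : ∑ i, (b i) ^ p ≤ ∑ i, (b i + c i) ^ p :=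
    Finset.sum_le_sum fun i _ => Real.rpow_le_rpow (hb i) (le_add_of_nonneg_right (hc i)) hp0.le
  nlinarith [mul_nonneg hε0.le (sub_nonneg.2 hmono)]
end
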